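/- Let dim_Θ(λ,μ) be defined for pairs of Young diagrams (λ,μ) with 2|λ| + |μ| = n by dim_Θ(∅,∅) = 1 and the recursion dim_Θ(λ,μ) = Σ_{η = λ−□, ν = μ+□} dim_Θ(η,ν) + Σ_{ν = μ−□} dim_Θ(λ,ν). Then dim_Θ(λ,μ) = (1/2^{|λ|}) · (|μ|+2|λ|)!/(|λ|!·|μ|!) · f^λ · f^μ, where f^λ denotes the number of standard Young tableaux of shape λ. -/

import Mathlib

open Finset

namespace Stmt8Aux
attribute [local instance] Classical.propDecidable

-- basic helpers
theorem yd_card_mono {μ ν : YoungDiagram} (h : μ ≤ ν) : μ.card ≤ ν.card :=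
  Finset.card_le_card (YoungDiagram.cells_subset_iff.mpr h)

theorem yd_eq_of_le_of_card_le {μ ν : YoungDiagram} (h : μ ≤ ν) (hc : ν.card ≤ μ.card) :
    μ = ν :=
  YoungDiagram.ext (Finset.eq_of_subset_of_card_le (YoungDiagram.cells_subset_iff.mpr h) hc)

theorem yd_eq_bot_of_card_eq_zero {μ : YoungDiagram} (h : μ.card = 0) : μ = ⊥ := by
  have := Finset.card_eq_zero.mp h
  exact YoungDiagram.ext (by simp [this])

theorem yd_card_bot : (⊥ : YoungDiagram).card = 0 := by
  simp [YoungDiagram.card, YoungDiagram.cells_bot]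

theorem yd_card_sup_add_card_inf (μ ν : YoungDiagram) :
    (μ ⊔ ν).card + (μ ⊓ ν).card = μ.card + ν.card := by
  simpa [YoungDiagram.card, YoungDiagram.cells_sup, YoungDiagram.cells_inf] using
    Finset.card_union_add_card_inter μ.cells ν.cells


/-- add a cell at end of row `i` (when valid), else identity -/
def addCell (μ : YoungDiagram) (i : ℕ) : YoungDiagram :=
  if h : i = 0 ∨ μ.rowLen i < μ.rowLen (i - 1) then
    { cells := insert (i, μ.rowLen i) μ.cells
      isLowerSet := by
        rintro ⟨a, b⟩ ⟨c, d⟩ hle hd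
        simp only [Finset.coe_insert, Set.mem_insert_iff, Finset.mem_coe,
          YoungDiagram.mem_cells] at hd ⊢
        obtain ⟨h1, h2⟩ : c ≤ a ∧ d ≤ b := Prod.mk_le_mk.mp hle
        rcases hd with hd | hd
        · have ha : a = i := (Prod.ext_iff.mp hd).1
          have hb : b = μ.rowLen i := (Prod.ext_iff.mp hd).2
          by_cases hdlt : d < μ.rowLen i
          · refine Or.inr (YoungDiagram.mem_iff_lt_rowLen.mpr ?_)
            have hra : μ.rowLen a ≤ μ.rowLen c := μ.rowLen_anti c a h1
            rw [ha] at hra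
            omega
          · have hd2 : d = μ.rowLen i := by omega
            by_cases hca : c = a
            · left; rw [hca, ha, hd2]
            · right
              apply YoungDiagram.mem_iff_lt_rowLen.mpr
              rw [hd2]
              rcases h with h | h
              · omega
              · calc μ.rowLen i < μ.rowLen (i-1) := h
                  _ ≤ μ.rowLen c := μ.rowLen_anti _ _ (by omega)
        · exact Or.inr (μ.isLowerSet hle hd) }
  else μ

theorem addCell_mem {μ : YoungDiagram} {i : ℕ} (h : i = 0 ∨ μ.rowLen i < μ.rowLen (i - 1))
    {c : ℕ × ℕ} : c ∈ addCell μ i ↔ c = (i, μ.rowLen i) ∨ c ∈ μ := by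
  rw [addCell, dif_pos h]
  change c ∈ insert (i, μ.rowLen i) μ.cells ↔ _
  simp

theorem addCell_cells {μ : YoungDiagram} {i : ℕ} (h : i = 0 ∨ μ.rowLen i < μ.rowLen (i - 1)) :
    (addCell μ i).cells = insert (i, μ.rowLen i) μ.cells := by
  rw [addCell, dif_pos h]

theorem new_notmem (μ : YoungDiagram) (i : ℕ) : (i, μ.rowLen i) ∉ μ := by
  simp [YoungDiagram.mem_iff_lt_rowLen]

theorem addCell_covers {μ : YoungDiagram} {i : ℕ}
    (h : i = 0 ∨ μ.rowLen i < μ.rowLen (i - 1)) :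
    μ ≤ addCell μ i ∧ (addCell μ i).card = μ.card + 1 := by
  constructor
  · intro c hc
    exact (addCell_mem h).mpr (Or.inr hc)
  · rw [YoungDiagram.card, addCell_cells h,
      Finset.card_insert_of_notMem (by simpa using new_notmem μ i)]

/-- every cover of `μ` is `addCell μ i` for a valid `i` -/
theorem cover_eq_addCell {μ ν : YoungDiagram} (hle : μ ≤ ν) (hc : ν.card = μ.card + 1) :
    ∃ i, (i = 0 ∨ μ.rowLen i < μ.rowLen (i - 1)) ∧ ν = addCell μ i := by
  have hsub : μ.cells ⊆ ν.cells := YoungDiagram.cells_subset_iff.mpr hle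
  have hdiff : (ν.cells \ μ.cells).card = 1 := by
    rw [Finset.card_sdiff_of_subset hsub]
    have h1 : ν.card = ν.cells.card := rfl
    have h2 : μ.card = μ.cells.card := rfl
    omega
  obtain ⟨c0, hcel⟩ := Finset.card_eq_one.mp hdiff
  have hcn : ν.cells = insert c0 μ.cells := by
    apply Finset.Subset.antisymm
    · intro x hx
      by_cases hxm : x ∈ μ.cells
      · exact Finset.mem_insert_of_mem hxm
      · have hx2 : x ∈ ν.cells \ μ.cells := Finset.mem_sdiff.mpr ⟨hx, hxm⟩
        rw [hcel, Finset.mem_singleton] at hx2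
        simp [hx2]
    · intro x hx
      rcases Finset.mem_insert.mp hx with hx | hx
      · have hm : c0 ∈ ν.cells \ μ.cells := by rw [hcel]; simp
        rw [hx]
        exact (Finset.mem_sdiff.mp hm).1
      · exact hsub hx
  obtain ⟨i, j⟩ := c0
  have hcν : (i, j) ∈ ν := by
    have : (i, j) ∈ ν.cells \ μ.cells := by rw [hcel]; simp
    exact (Finset.mem_sdiff.mp this).1
  have hcμ : (i, j) ∉ μ := by
    have : (i, j) ∈ ν.cells \ μ.cells := by rw [hcel]; simp
    exact (Finset.mem_sdiff.mp this).2
  -- j = rowLen μ i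
  have hj1 : μ.rowLen i ≤ j := by
    by_contra hlt
    exact hcμ (YoungDiagram.mem_iff_lt_rowLen.mpr (by omega))
  have hmem_of_lt : ∀ j', j' < j → (i, j') ∈ μ := by
    intro j' hj'
    have : (i, j') ∈ ν := ν.up_left_mem le_rfl (le_of_lt hj') hcν
    have : (i, j') ∈ ν.cells := this
    rw [hcn, Finset.mem_insert] at this
    rcases this with h | h
    · exact absurd (Prod.ext_iff.mp h).2 (by omega)
    · exact h
  have hj2 : j ≤ μ.rowLen i := by
    by_contra hlt
    exact new_notmem μ i (hmem_of_lt _ (by omega))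
  have hj : j = μ.rowLen i := le_antisymm hj2 hj1
  have hvalid : i = 0 ∨ μ.rowLen i < μ.rowLen (i - 1) := by
    rcases Nat.eq_zero_or_pos i with h0 | h0
    · exact Or.inl h0
    · right
      have : (i - 1, j) ∈ ν := ν.up_left_mem (by omega) le_rfl hcν
      have : (i - 1, j) ∈ ν.cells := this
      rw [hcn, Finset.mem_insert] at this
      rcases this with h | h
      · exact absurd (Prod.ext_iff.mp h).1 (by omega)
      · have := YoungDiagram.mem_iff_lt_rowLen.mp h
        omega
  refine ⟨i, hvalid, ?_⟩
  apply YoungDiagram.ext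
  rw [addCell_cells hvalid, hcn, hj]

theorem addCell_inj {μ : YoungDiagram} {i i' : ℕ}
    (h : i = 0 ∨ μ.rowLen i < μ.rowLen (i - 1))
    (h' : i' = 0 ∨ μ.rowLen i' < μ.rowLen (i' - 1))
    (heq : addCell μ i = addCell μ i') : i = i' := by
  have : (i, μ.rowLen i) ∈ addCell μ i' := by
    rw [← heq]; exact (addCell_mem h).mpr (Or.inl rfl)
  rcases (addCell_mem h').mp this with he | he
  · exact (Prod.ext_iff.mp he).1
  · exact absurd he (new_notmem μ i)


/-- remove the last cell of row `i` (when removable), else identity -/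
def delCell (μ : YoungDiagram) (i : ℕ) : YoungDiagram :=
  if h : μ.rowLen (i + 1) < μ.rowLen i then
    { cells := μ.cells.erase (i, μ.rowLen i - 1)
      isLowerSet := by
        rintro ⟨a, b⟩ ⟨c, d⟩ hle hd
        simp only [Finset.coe_erase, Set.mem_diff, Finset.mem_coe,
          YoungDiagram.mem_cells, Set.mem_singleton_iff] at hd ⊢
        obtain ⟨h1, h2⟩ : c ≤ a ∧ d ≤ b := Prod.mk_le_mk.mp hle
        obtain ⟨hdm, hdn⟩ := hd
        refine ⟨μ.isLowerSet hle hdm, ?_⟩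
        intro he
        have hc : c = i := (Prod.ext_iff.mp he).1
        have hdd : d = μ.rowLen i - 1 := (Prod.ext_iff.mp he).2
        have hbr : b < μ.rowLen a := YoungDiagram.mem_iff_lt_rowLen.mp hdm
        -- a ≥ c = i; if a = i then b ≤ rowLen i - 1 = d ≤ b so (a,b)=(i,d) contra
        rcases Nat.lt_or_ge i a with hia | hia
        · have : μ.rowLen a ≤ μ.rowLen (i+1) := μ.rowLen_anti _ _ (by omega)
          omega
        · have ha : a = i := by omega
          rw [ha] at hbr
          apply hdn
          rw [Prod.mk.injEq]
          exact ⟨ha, by omega⟩ }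
  else μ

theorem rowLen_pos_of_rem {μ : YoungDiagram} {i : ℕ} (h : μ.rowLen (i + 1) < μ.rowLen i) :
    0 < μ.rowLen i := by omega

theorem last_mem {μ : YoungDiagram} {i : ℕ} (h : 0 < μ.rowLen i) :
    (i, μ.rowLen i - 1) ∈ μ :=
  YoungDiagram.mem_iff_lt_rowLen.mpr (by omega)

theorem delCell_cells {μ : YoungDiagram} {i : ℕ} (h : μ.rowLen (i + 1) < μ.rowLen i) :
    (delCell μ i).cells = μ.cells.erase (i, μ.rowLen i - 1) := by
  rw [delCell, dif_pos h]

theorem delCell_covered {μ : YoungDiagram} {i : ℕ} (h : μ.rowLen (i + 1) < μ.rowLen i) :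
    delCell μ i ≤ μ ∧ μ.card = (delCell μ i).card + 1 := by
  constructor
  · intro c hc
    have hc' : c ∈ (delCell μ i).cells := hc
    rw [delCell_cells h] at hc'
    exact Finset.mem_of_mem_erase hc' 
  · have : (delCell μ i).card = μ.card - 1 := by
      rw [YoungDiagram.card, delCell_cells h,
        Finset.card_erase_of_mem (by exact last_mem (rowLen_pos_of_rem h))]
    have hpos : 0 < μ.card := by
      rw [YoungDiagram.card, Finset.card_pos]
      exact ⟨_, last_mem (rowLen_pos_of_rem h)⟩
    omega

theorem covered_eq_delCell {μ η : YoungDiagram} (hle : η ≤ μ) (hc : μ.card = η.card + 1) :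
    ∃ i, (μ.rowLen (i + 1) < μ.rowLen i) ∧ η = delCell μ i := by
  have hsub : η.cells ⊆ μ.cells := YoungDiagram.cells_subset_iff.mpr hle
  have hdiff : (μ.cells \ η.cells).card = 1 := by
    rw [Finset.card_sdiff_of_subset hsub]
    have h1 : μ.card = μ.cells.card := rfl
    have h2 : η.card = η.cells.card := rfl
    omega
  obtain ⟨c0, hcel⟩ := Finset.card_eq_one.mp hdiff
  have hcells : μ.cells = insert c0 η.cells := by
    apply Finset.Subset.antisymm
    · intro x hx
      by_cases hxm : x ∈ η.cells
      · exact Finset.mem_insert_of_mem hxm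
      · have hx2 : x ∈ μ.cells \ η.cells := Finset.mem_sdiff.mpr ⟨hx, hxm⟩
        rw [hcel, Finset.mem_singleton] at hx2
        simp [hx2]
    · intro x hx
      rcases Finset.mem_insert.mp hx with hx | hx
      · have hm : c0 ∈ μ.cells \ η.cells := by rw [hcel]; simp
        rw [hx]
        exact (Finset.mem_sdiff.mp hm).1
      · exact hsub hx
  obtain ⟨i, j⟩ := c0
  have hcμ : (i, j) ∈ μ := by
    have : (i, j) ∈ μ.cells \ η.cells := by rw [hcel]; simp
    exact (Finset.mem_sdiff.mp this).1
  have hcη : (i, j) ∉ η := by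
    have : (i, j) ∈ μ.cells \ η.cells := by rw [hcel]; simp
    exact (Finset.mem_sdiff.mp this).2
  -- (i, j+1) ∉ μ, so j = rowLen μ i - 1
  have hj1 : j < μ.rowLen i := YoungDiagram.mem_iff_lt_rowLen.mp hcμ
  have hnext : (i, j + 1) ∉ μ := by
    intro hmem
    have : (i, j + 1) ∈ η.cells := by
      have h2 : (i, j+1) ∈ μ.cells := hmem
      rw [hcells, Finset.mem_insert] at h2
      rcases h2 with h2 | h2
      · exact absurd (Prod.ext_iff.mp h2).2 (by omega)
      · exact h2
    exact hcη (η.up_left_mem le_rfl (by omega) this)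
  have hj : j = μ.rowLen i - 1 := by
    have := YoungDiagram.mem_iff_lt_rowLen.not.mp hnext
    omega
  have hrem : μ.rowLen (i + 1) < μ.rowLen i := by
    have hdown : (i + 1, j) ∉ μ := by
      intro hmem
      have : (i + 1, j) ∈ η.cells := by
        have h2 : (i+1, j) ∈ μ.cells := hmem
        rw [hcells, Finset.mem_insert] at h2
        rcases h2 with h2 | h2
        · exact absurd (Prod.ext_iff.mp h2).1 (by omega)
        · exact h2
      exact hcη (η.up_left_mem (by omega) le_rfl this)
    have := YoungDiagram.mem_iff_lt_rowLen.not.mp hdown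
    omega
  refine ⟨i, hrem, ?_⟩
  apply YoungDiagram.ext
  rw [delCell_cells hrem, hcells, ← hj]
  rw [Finset.erase_insert (by simpa using hcη)]

theorem delCell_inj {μ : YoungDiagram} {i i' : ℕ}
    (h : μ.rowLen (i + 1) < μ.rowLen i) (h' : μ.rowLen (i' + 1) < μ.rowLen i')
    (heq : delCell μ i = delCell μ i') : i = i' := by
  by_contra hne
  have hmem : (i, μ.rowLen i - 1) ∈ (delCell μ i').cells := by
    rw [delCell_cells h']
    refine Finset.mem_erase.mpr ⟨?_, last_mem (rowLen_pos_of_rem h)⟩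
    intro he
    exact hne (Prod.ext_iff.mp he).1
  rw [← heq, delCell_cells h] at hmem
  exact absurd rfl (Finset.mem_erase.mp hmem).1

theorem rowLen_pos_iff {μ : YoungDiagram} {i : ℕ} : 0 < μ.rowLen i ↔ i < μ.colLen 0 := by
  rw [← YoungDiagram.mem_iff_lt_colLen, YoungDiagram.mem_iff_lt_rowLen]

theorem card_above_eq_card_below_succ
    (below above : YoungDiagram → Finset YoungDiagram)
    (hbelow : ∀ ν μ, μ ∈ below ν ↔ μ ≤ ν ∧ ν.card = μ.card + 1)
    (habove : ∀ μ ν, ν ∈ above μ ↔ μ ≤ ν ∧ ν.card = μ.card + 1)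
    (μ : YoungDiagram) : (above μ).card = (below μ).card + 1 := by
  classical
  set c := μ.colLen 0 with hc
  set Aset : Finset ℕ :=
    (range (c+2)).filter (fun i => i = 0 ∨ μ.rowLen i < μ.rowLen (i-1)) with hA
  set Rset : Finset ℕ :=
    (range (c+1)).filter (fun i => μ.rowLen (i+1) < μ.rowLen i) with hR
  have hmemA : ∀ i ∈ Aset, i = 0 ∨ μ.rowLen i < μ.rowLen (i-1) := by
    intro i hi; exact (Finset.mem_filter.mp hi).2
  have hmemR : ∀ i ∈ Rset, μ.rowLen (i+1) < μ.rowLen i := by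
    intro i hi; exact (Finset.mem_filter.mp hi).2
  have habove_eq : above μ = Aset.image (addCell μ) := by
    ext ν
    rw [habove, Finset.mem_image]
    constructor
    · rintro ⟨hle, hcard⟩
      obtain ⟨i, hvalid, rfl⟩ := cover_eq_addCell hle hcard
      refine ⟨i, Finset.mem_filter.mpr ⟨Finset.mem_range.mpr ?_, hvalid⟩, rfl⟩
      rcases hvalid with h0 | h0
      · omega
      · have : 0 < μ.rowLen (i-1) := by omega
        rw [rowLen_pos_iff] at this
        omega
    · rintro ⟨i, hi, rfl⟩
      exact addCell_covers (hmemA i hi)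
  have hbelow_eq : below μ = Rset.image (delCell μ) := by
    ext η
    rw [hbelow, Finset.mem_image]
    constructor
    · rintro ⟨hle, hcard⟩
      obtain ⟨i, hvalid, rfl⟩ := covered_eq_delCell hle hcard
      refine ⟨i, Finset.mem_filter.mpr ⟨Finset.mem_range.mpr ?_, hvalid⟩, rfl⟩
      have : 0 < μ.rowLen i := by omega
      rw [rowLen_pos_iff] at this
      omega
    · rintro ⟨i, hi, rfl⟩
      exact ⟨(delCell_covered (hmemR i hi)).1, (delCell_covered (hmemR i hi)).2⟩
  have hAcard : (above μ).card = Aset.card := by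
    rw [habove_eq]
    apply Finset.card_image_of_injOn
    intro i hi j hj
    exact addCell_inj (hmemA i hi) (hmemA j hj)
  have hRcard : (below μ).card = Rset.card := by
    rw [hbelow_eq]
    apply Finset.card_image_of_injOn
    intro i hi j hj
    exact delCell_inj (hmemR i hi) (hmemR j hj)
  rw [hAcard, hRcard]
  have hAR : Aset = insert 0 (Rset.image (· + 1)) := by
    ext i
    simp only [Finset.mem_insert, Finset.mem_image, hA, hR, Finset.mem_filter,
      Finset.mem_range]
    constructor
    · rintro ⟨hir, h0 | h0⟩
      · exact Or.inl h0
      · right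
        refine ⟨i - 1, ⟨?_, ?_⟩, ?_⟩
        · have hipos : i ≠ 0 := by
            intro h; rw [h] at h0; simp at h0
          have : 0 < μ.rowLen (i-1) := by omega
          rw [rowLen_pos_iff] at this
          omega
        · have hipos : i ≠ 0 := by
            intro h; rw [h] at h0; simp at h0
          have : i - 1 + 1 = i := by omega
          rw [this]
          exact h0
        · have hipos : i ≠ 0 := by
            intro h; rw [h] at h0; simp at h0
          omega
    · rintro (rfl | ⟨j, ⟨hjr, hj⟩, rfl⟩)
      · exact ⟨by omega, Or.inl rfl⟩
      · refine ⟨by omega, Or.inr ?_⟩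
        simpa using hj
  rw [hAR, Finset.card_insert_of_notMem (by simp), Finset.card_image_of_injective _
    (fun a b h => by omega)]

section
variable (below above : YoungDiagram → Finset YoungDiagram)
  (hbelow : ∀ ν μ, μ ∈ below ν ↔ μ ≤ ν ∧ ν.card = μ.card + 1)
  (habove : ∀ μ ν, ν ∈ above μ ↔ μ ≤ ν ∧ ν.card = μ.card + 1)

include hbelow habove in
theorem count_lemma (m ρ : YoungDiagram) :
    ((above m).filter (fun ν => ρ ∈ below ν)).card
      = ((below m).filter (fun η => ρ ∈ above η)).card + (if ρ = m then 1 else 0) := by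
  classical
  by_cases hrm : ρ = m
  · subst hrm
    rw [if_pos rfl]
    have h1 : (above ρ).filter (fun ν => ρ ∈ below ν) = above ρ := by
      apply Finset.filter_true_of_mem
      intro ν hν
      rw [hbelow]
      exact (habove ρ ν).mp hν
    have h2 : (below ρ).filter (fun η => ρ ∈ above η) = below ρ := by
      apply Finset.filter_true_of_mem
      intro η hη
      rw [habove]
      exact (hbelow ρ η).mp hη
    rw [h1, h2]
    exact card_above_eq_card_below_succ below above hbelow habove ρ
  · rw [if_neg hrm, Nat.add_zero]
    by_cases hcard : ρ.card = m.card
    · -- counts are 0 or 1, equal by sup/inf cardinality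
      have hρnm : ¬ ρ ≤ m := by
        intro hle
        exact hrm (yd_eq_of_le_of_card_le hle (le_of_eq hcard.symm))
      have hsup_lb : m.card + 1 ≤ (m ⊔ ρ).card := by
        have h1 : m.card ≤ (m ⊔ ρ).card := yd_card_mono le_sup_left
        rcases Nat.lt_or_ge m.card (m ⊔ ρ).card with h | h
        · omega
        · exfalso
          have : m = m ⊔ ρ := yd_eq_of_le_of_card_le le_sup_left h
          exact hρnm (le_of_le_of_eq le_sup_right this.symm)
      have hinf_ub : (m ⊓ ρ).card + 1 ≤ m.card := by
        have h1 : (m ⊓ ρ).card ≤ m.card := yd_card_mono inf_le_left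
        rcases Nat.lt_or_ge (m ⊓ ρ).card m.card with h | h
        · omega
        · exfalso
          have h2 : m ⊓ ρ = m := yd_eq_of_le_of_card_le inf_le_left h
          have h3 : m ≤ ρ := h2 ▸ inf_le_right
          exact hrm (yd_eq_of_le_of_card_le h3 (le_of_eq hcard)).symm
      have hsum := yd_card_sup_add_card_inf m ρ
      have hfilt1 : ((above m).filter (fun ν => ρ ∈ below ν))
          = if (m ⊔ ρ).card = m.card + 1 then {m ⊔ ρ} else ∅ := by
        have hsub : ∀ ν ∈ (above m).filter (fun ν => ρ ∈ below ν), ν = m ⊔ ρ := by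
          intro ν hν
          obtain ⟨h1, h2⟩ := Finset.mem_filter.mp hν
          obtain ⟨hm1, hm2⟩ := (habove m ν).mp h1
          obtain ⟨hr1, _⟩ := (hbelow ν ρ).mp h2
          refine (yd_eq_of_le_of_card_le (sup_le hm1 hr1) (by omega)).symm
        split_ifs with hs
        · apply Finset.Subset.antisymm
          · intro ν hν
            rw [Finset.mem_singleton]
            exact hsub ν hν
          · rw [Finset.singleton_subset_iff, Finset.mem_filter, habove, hbelow]
            refine ⟨⟨le_sup_left, hs⟩, le_sup_right, by omega⟩
        · rw [Finset.eq_empty_iff_forall_notMem]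
          intro ν hν
          have := hsub ν hν
          obtain ⟨h1, _⟩ := Finset.mem_filter.mp hν
          obtain ⟨_, hm2⟩ := (habove m ν).mp h1
          exact hs (by rw [← this]; omega)
      have hfilt2 : ((below m).filter (fun η => ρ ∈ above η))
          = if (m ⊓ ρ).card + 1 = m.card then {m ⊓ ρ} else ∅ := by
        have hsub : ∀ η ∈ (below m).filter (fun η => ρ ∈ above η), η = m ⊓ ρ := by
          intro η hη
          obtain ⟨h1, h2⟩ := Finset.mem_filter.mp hη
          obtain ⟨hm1, hm2⟩ := (hbelow m η).mp h1
          obtain ⟨hr1, hr2⟩ := (habove η ρ).mp h2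
          exact yd_eq_of_le_of_card_le (le_inf hm1 hr1) (by omega)
        split_ifs with hs
        · apply Finset.Subset.antisymm
          · intro η hη
            rw [Finset.mem_singleton]
            exact hsub η hη
          · rw [Finset.singleton_subset_iff, Finset.mem_filter, hbelow, habove]
            refine ⟨⟨inf_le_left, by omega⟩, inf_le_right, by omega⟩
        · rw [Finset.eq_empty_iff_forall_notMem]
          intro η hη
          have := hsub η hη
          obtain ⟨h1, _⟩ := Finset.mem_filter.mp hη
          obtain ⟨_, hm2⟩ := (hbelow m η).mp h1
          exact hs (by rw [← this]; omega)
      rw [hfilt1, hfilt2]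
      have hiff : (m ⊔ ρ).card = m.card + 1 ↔ (m ⊓ ρ).card + 1 = m.card := by omega
      split_ifs with h1 h2 h2
      · rfl
      · exact absurd (hiff.mp h1) h2
      · exact absurd (hiff.mpr h2) h1
      · rfl
    · -- different cards: both empty
      have h1 : (above m).filter (fun ν => ρ ∈ below ν) = ∅ := by
        rw [Finset.eq_empty_iff_forall_notMem]
        intro ν hν
        obtain ⟨ha, hb⟩ := Finset.mem_filter.mp hν
        obtain ⟨_, hm2⟩ := (habove m ν).mp ha
        obtain ⟨_, hr2⟩ := (hbelow ν ρ).mp hb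
        omega
      have h2 : (below m).filter (fun η => ρ ∈ above η) = ∅ := by
        rw [Finset.eq_empty_iff_forall_notMem]
        intro η hη
        obtain ⟨ha, hb⟩ := Finset.mem_filter.mp hη
        obtain ⟨_, hm2⟩ := (hbelow m η).mp ha
        obtain ⟨_, hr2⟩ := (habove η ρ).mp hb
        omega
      rw [h1, h2]

include hbelow habove in
theorem sum_above (f : YoungDiagram → ℕ) (hf0 : f ⊥ = 1)
    (hf : ∀ ν, ν ≠ ⊥ → f ν = ∑ μ ∈ below ν, f μ) :
    ∀ m : YoungDiagram, ∑ ν ∈ above m, f ν = (m.card + 1) * f m := by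
  classical
  suffices H : ∀ n : ℕ, ∀ m : YoungDiagram, m.card = n →
      ∑ ν ∈ above m, f ν = (m.card + 1) * f m by
    exact fun m => H m.card m rfl
  intro n
  induction n using Nat.strong_induction_on with
  | _ n IH =>
    intro m hm
    set T : Finset YoungDiagram :=
      ((above m).biUnion below) ∪ ((below m).biUnion above) ∪ {m} with hT
    have hmT : m ∈ T := by simp [hT]
    have hsubB : ∀ ν ∈ above m, below ν ⊆ T := by
      intro ν hν ρ hρ
      simp only [hT, Finset.mem_union, Finset.mem_biUnion]
      exact Or.inl (Or.inl ⟨ν, hν, hρ⟩)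
    have hsubA : ∀ η ∈ below m, above η ⊆ T := by
      intro η hη ρ hρ
      simp only [hT, Finset.mem_union, Finset.mem_biUnion]
      exact Or.inl (Or.inr ⟨η, hη, hρ⟩)
    -- expand once
    have step1 : ∑ ν ∈ above m, f ν
        = ∑ ρ ∈ T, ((above m).filter (fun ν => ρ ∈ below ν)).card * f ρ := by
      have e1 : ∀ ν ∈ above m, f ν = ∑ ρ ∈ T, if ρ ∈ below ν then f ρ else 0 := by
        intro ν hν
        have hνbot : ν ≠ ⊥ := by
          intro h
          have := ((habove m ν).mp hν).2
          rw [h, yd_card_bot] at this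
          omega
        rw [hf ν hνbot, Finset.sum_ite_mem,
          Finset.inter_eq_right.mpr (hsubB ν hν)]
      rw [Finset.sum_congr rfl e1, Finset.sum_comm]
      apply Finset.sum_congr rfl
      intro ρ _
      rw [← Finset.sum_filter, Finset.sum_const, smul_eq_mul]
    have step2 : ∑ η ∈ below m, ∑ ν ∈ above η, f ν
        = ∑ ρ ∈ T, ((below m).filter (fun η => ρ ∈ above η)).card * f ρ := by
      have e1 : ∀ η ∈ below m, ∑ ν ∈ above η, f ν
          = ∑ ρ ∈ T, if ρ ∈ above η then f ρ else 0 := by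
        intro η hη
        rw [Finset.sum_ite_mem, Finset.inter_eq_right.mpr (hsubA η hη)]
      rw [Finset.sum_congr rfl e1, Finset.sum_comm]
      apply Finset.sum_congr rfl
      intro ρ _
      rw [← Finset.sum_filter, Finset.sum_const, smul_eq_mul]
    have step3 : ∑ ν ∈ above m, f ν
        = (∑ η ∈ below m, ∑ ν ∈ above η, f ν) + f m := by
      rw [step1, step2]
      have : ∀ ρ ∈ T, ((above m).filter (fun ν => ρ ∈ below ν)).card * f ρ
          = ((below m).filter (fun η => ρ ∈ above η)).card * f ρ
            + (if ρ = m then f ρ else 0) := by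
        intro ρ _
        rw [count_lemma below above hbelow habove m ρ, Nat.add_mul]
        congr 1
        split_ifs <;> simp
      rw [Finset.sum_congr rfl this, Finset.sum_add_distrib,
        Finset.sum_ite_eq' T m f, if_pos hmT]
    -- apply IH to each η in below m
    have step4 : ∀ η ∈ below m, ∑ ν ∈ above η, f ν = m.card * f η := by
      intro η hη
      obtain ⟨_, hc⟩ := (hbelow m η).mp hη
      have hlt : η.card < n := by omega
      rw [IH η.card hlt η rfl]
      congr 1
      omega
    rw [step3, Finset.sum_congr rfl step4, ← Finset.mul_sum]
    by_cases hmbot : m = ⊥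
    · subst hmbot
      rw [yd_card_bot]
      simp [hf0]
    · rw [← hf m hmbot]
      ring

end

noncomputable def C (a b : ℕ) : ℚ :=
  (Nat.factorial (b + 2*a) : ℚ) / (2^a * Nat.factorial a * Nat.factorial b)

theorem C_zero (b : ℕ) : C 0 b = 1 := by
  unfold C
  simp [Nat.factorial_ne_zero, div_self, Nat.cast_ne_zero]

theorem C_step (a b : ℕ) : C (a+1) (b+1) = C a (b+2) * (b+2) + C (a+1) b := by
  unfold C
  have e1 : (b+1) + 2*(a+1) = (b + 2*a + 2) + 1 := by ring
  have e2 : (b+2) + 2*a = b + 2*a + 2 := by ring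
  have e3 : b + 2*(a+1) = b + 2*a + 2 := by ring
  rw [e1, e2, e3, Nat.factorial_succ (b + 2*a + 2),
    show b+2 = (b+1)+1 from rfl, Nat.factorial_succ (b+1), Nat.factorial_succ b,
    Nat.factorial_succ a, pow_succ]
  have h1 : ((b + 2*a + 2).factorial : ℚ) ≠ 0 := Nat.cast_ne_zero.mpr (Nat.factorial_ne_zero _)
  have h2 : ((a).factorial : ℚ) ≠ 0 := Nat.cast_ne_zero.mpr (Nat.factorial_ne_zero _)
  have h3 : ((b).factorial : ℚ) ≠ 0 := Nat.cast_ne_zero.mpr (Nat.factorial_ne_zero _)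
  have h4 : (2:ℚ)^a ≠ 0 := pow_ne_zero _ two_ne_zero
  push_cast
  field_simp
  ring

theorem C_edge (a : ℕ) : C (a+1) 0 = C a 1 := by
  unfold C
  have e1 : 0 + 2*(a+1) = (1 + 2*a) + 1 := by ring
  rw [e1, Nat.factorial_succ (1 + 2*a), Nat.factorial_succ a, pow_succ]
  have h1 : ((1 + 2*a).factorial : ℚ) ≠ 0 := Nat.cast_ne_zero.mpr (Nat.factorial_ne_zero _)
  have h2 : ((a).factorial : ℚ) ≠ 0 := Nat.cast_ne_zero.mpr (Nat.factorial_ne_zero _)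
  have h4 : (2:ℚ)^a ≠ 0 := pow_ne_zero _ two_ne_zero
  push_cast
  field_simp
  ring

end Stmt8Aux

open Stmt8Aux in
/-- Dimension formula for the coupled Young graph: if `dimΘ` satisfies the
defining recursion of path counts on the coupled Young graph, and `f` is the
number of standard Young tableaux (path counts on the Young graph), then
`dimΘ (λ, μ) = (1/2^|λ|) * (|μ|+2|λ|)! / (|λ|! * |μ|!) * f λ * f μ`. -/
theorem stmt8
    (below above : YoungDiagram → Finset YoungDiagram)
    (hbelow : ∀ ν μ, μ ∈ below ν ↔ μ ≤ ν ∧ ν.card = μ.card + 1)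
    (habove : ∀ μ ν, ν ∈ above μ ↔ μ ≤ ν ∧ ν.card = μ.card + 1)
    (f : YoungDiagram → ℕ)
    (hf0 : f ⊥ = 1)
    (hf : ∀ ν, ν ≠ ⊥ → f ν = ∑ μ ∈ below ν, f μ)
    (dimΘ : YoungDiagram → YoungDiagram → ℕ)
    (hd0 : dimΘ ⊥ ⊥ = 1)
    (hdrec : ∀ l m : YoungDiagram, ¬(l = ⊥ ∧ m = ⊥) →
      dimΘ l m =
        (∑ η ∈ below l, ∑ ν ∈ above m, dimΘ η ν) +
          ∑ ν ∈ below m, dimΘ l ν) :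
    ∀ l m : YoungDiagram,
      (dimΘ l m : ℚ) =
        (1 / 2 ^ l.card) *
            ((Nat.factorial (m.card + 2 * l.card) : ℚ) /
              (Nat.factorial l.card * Nat.factorial m.card)) *
          (f l : ℚ) * (f m : ℚ) := by
  have hU := sum_above below above hbelow habove f hf0 hf
  have hbelow_bot : below ⊥ = ∅ := by
    rw [Finset.eq_empty_iff_forall_notMem]
    intro μ hμ
    have := ((hbelow ⊥ μ).mp hμ).2
    rw [yd_card_bot] at this
    omega
  suffices H : ∀ n : ℕ, ∀ l m : YoungDiagram, 2*l.card + m.card = n →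
      (dimΘ l m : ℚ) = C l.card m.card * f l * f m by
    intro l m
    rw [H (2*l.card + m.card) l m rfl]
    simp only [Stmt8Aux.C]
    ring
  intro n
  induction n using Nat.strong_induction_on with
  | _ n IH =>
    intro l m hn
    by_cases hbot : l = ⊥ ∧ m = ⊥
    · obtain ⟨rfl, rfl⟩ := hbot
      rw [hd0, hf0, yd_card_bot, C_zero]
      norm_num
    · rw [hdrec l m hbot]
      push_cast
      -- first double sum
      have hA : ∀ η ∈ below l, (∑ ν ∈ above m, (dimΘ η ν : ℚ))
          = C (l.card - 1) (m.card + 1) * ((m.card + 1) * f m) * f η := by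
        intro η hη
        obtain ⟨_, hcl⟩ := (hbelow l η).mp hη
        have hstep : ∀ ν ∈ above m, (dimΘ η ν : ℚ)
            = (C (l.card - 1) (m.card + 1) * f η) * f ν := by
          intro ν hν
          obtain ⟨_, hcm⟩ := (habove m ν).mp hν
          have hIH := IH (2*η.card + ν.card) (by omega) η ν rfl
          rw [hIH, show η.card = l.card - 1 by omega, hcm]
        rw [Finset.sum_congr rfl hstep, ← Finset.mul_sum]
        have hUc : (∑ ν ∈ above m, (f ν : ℚ)) = ((m.card : ℚ) + 1) * f m := by
          have := congrArg (Nat.cast : ℕ → ℚ) (hU m)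
          push_cast at this
          exact this
        rw [hUc]
        ring
      rw [Finset.sum_congr rfl hA, ← Finset.mul_sum]
      -- second sum
      have hB : ∀ ν ∈ below m, (dimΘ l ν : ℚ)
          = (C l.card (m.card - 1) * f l) * f ν := by
        intro ν hν
        obtain ⟨_, hcm⟩ := (hbelow m ν).mp hν
        have hIH := IH (2*l.card + ν.card) (by omega) l ν rfl
        rw [hIH, show ν.card = m.card - 1 by omega]
      rw [Finset.sum_congr rfl hB, ← Finset.mul_sum]
      -- now case split
      by_cases hl : l = ⊥
      · subst hl
        have hm : m ≠ ⊥ := fun h => hbot ⟨rfl, h⟩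
        have hMpos : 1 ≤ m.card := by
          rcases Nat.eq_zero_or_pos m.card with h | h
          · exact absurd (yd_eq_bot_of_card_eq_zero h) hm
          · omega
        obtain ⟨b, hb⟩ : ∃ b, m.card = b + 1 := ⟨m.card - 1, by omega⟩
        rw [hbelow_bot, Finset.sum_empty, ← Nat.cast_sum, ← hf m hm, yd_card_bot, hb]
        simp only [C_zero]
        ring
      · have hLpos : 1 ≤ l.card := by
          rcases Nat.eq_zero_or_pos l.card with h | h
          · exact absurd (yd_eq_bot_of_card_eq_zero h) hl
          · omega
        obtain ⟨a, ha⟩ : ∃ a, l.card = a + 1 := ⟨l.card - 1, by omega⟩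
        have hfl : (∑ η ∈ below l, (f η : ℚ)) = (f l : ℚ) := by
          rw [← Nat.cast_sum, ← hf l hl]
        rw [hfl]
        by_cases hm : m = ⊥
        · subst hm
          rw [hbelow_bot, Finset.sum_empty, yd_card_bot, hf0, ha]
          rw [show a + 1 - 1 = a by omega, C_edge]
          push_cast
          ring
        · have hMpos : 1 ≤ m.card := by
            rcases Nat.eq_zero_or_pos m.card with h | h
            · exact absurd (yd_eq_bot_of_card_eq_zero h) hm
            · omega
          obtain ⟨b, hb⟩ : ∃ b, m.card = b + 1 := ⟨m.card - 1, by omega⟩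
          have hF : (∑ ν ∈ below m, (f ν : ℚ)) = (f m : ℚ) := by
            rw [← Nat.cast_sum, ← hf m hm]
          rw [hF, ha, hb, show a + 1 - 1 = a by omega, show b + 1 - 1 = b by omega,
            C_step]
          push_cast
          ring
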